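/- Let p₁,...,p_M ≥ 0 with Σᵢ pᵢ = 1 and let m₁,...,m_M be positive integers. Define the block diagonal matrix K with i-th block equal to (pᵢ/mᵢ)·J_{mᵢ}, where J_{mᵢ} is the mᵢ×mᵢ all-ones matrix. Then K is a density matrix and VNE(K) = −Σᵢ pᵢ log pᵢ. -/

import Mathlib

open Matrix

open Polynomial

variable {n : Type*} [Fintype n] [DecidableEq n]

lemma charpoly_conj_aux (U W A : Matrix n n ℝ) (hUW : U * W = 1) :
    (U * A * W).charpoly = A.charpoly := by
  have hmap : ∀ X Y : Matrix n n ℝ, (X * Y).map (C : ℝ → ℝ[X]) =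
      X.map C * Y.map C := fun X Y => by
    simp [← Matrix.map_mul]
  have hWU : W * U = 1 := mul_eq_one_comm.mp hUW
  have hcm : charmatrix (U * A * W) = U.map C * charmatrix A * W.map C := by
    unfold charmatrix
    rw [RingHom.mapMatrix_apply, mul_sub, sub_mul]
    congr 1
    · have h1 : (U.map C) * (Matrix.scalar n (X : ℝ[X])) = (Matrix.scalar n (X : ℝ[X])) * U.map C :=
        (scalar_commute (X : ℝ[X]) (Commute.all _) _).symm
      rw [h1, mul_assoc, ← hmap, hUW]
      simp
    · rw [hmap, hmap]; simp [RingHom.mapMatrix_apply]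
  unfold Matrix.charpoly
  rw [hcm, det_mul, det_mul, mul_comm, ← mul_assoc, ← det_mul, ← hmap, hWU]
  simp

lemma charmatrix_diag (d : n → ℝ) :
    charmatrix (diagonal d) = diagonal (fun i => (X : ℝ[X]) - C (d i)) := by
  ext i j
  by_cases h : i = j
  · subst h; simp [charmatrix_apply_eq]
  · rw [charmatrix_apply_ne _ _ _ h, diagonal_apply_ne _ h, diagonal_apply_ne _ h]
    simp

lemma charpoly_eq_prod_eigenvalues {A : Matrix n n ℝ} (hA : A.IsHermitian) :
    A.charpoly = ∏ j, ((X : ℝ[X]) - C (hA.eigenvalues j)) := by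
  have hU := (Matrix.mem_unitaryGroup_iff).mp (hA.eigenvectorUnitary).2
  have h := hA.spectral_theorem; rw [Unitary.conjStarAlgAut_apply] at h
  calc A.charpoly
      = ((hA.eigenvectorUnitary : Matrix n n ℝ) * diagonal (RCLike.ofReal ∘ hA.eigenvalues) *
        (star (hA.eigenvectorUnitary : Matrix n n ℝ))).charpoly := by rw [← h]
    _ = (diagonal (RCLike.ofReal ∘ hA.eigenvalues)).charpoly := charpoly_conj_aux _ _ _ hU
    _ = _ := by
        rw [Matrix.charpoly, charmatrix_diag, det_diagonal]
        simp

lemma conj_mul_conj (U W D E : Matrix n n ℝ) (hWU : W * U = 1) :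
    (U * D * W) * (U * E * W) = U * (D * E) * W := by
  have h1 : (U * D * W) * (U * E * W) = U * (D * ((W * U) * (E * W))) := by
    simp only [mul_assoc]
  rw [h1, hWU, one_mul]
  simp only [mul_assoc]

lemma trace_conj_aux (U W D : Matrix n n ℝ) (hWU : W * U = 1) :
    (U * D * W).trace = D.trace := by
  rw [trace_mul_cycle, hWU, one_mul]


lemma sum_eigenvalues_eq_trace' {A : Matrix n n ℝ} (hA : A.IsHermitian) :
    ∑ j, hA.eigenvalues j = A.trace := by
  have hU := (Matrix.mem_unitaryGroup_iff').mp (hA.eigenvectorUnitary).2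
  conv_rhs => rw [hA.spectral_theorem, Unitary.conjStarAlgAut_apply]
  rw [trace_conj_aux _ _ _ hU, trace_diagonal]
  simp

lemma sum_sq_eigenvalues_eq_trace' {A : Matrix n n ℝ} (hA : A.IsHermitian) :
    ∑ j, hA.eigenvalues j ^ 2 = (A * A).trace := by
  have hU := (Matrix.mem_unitaryGroup_iff').mp (hA.eigenvectorUnitary).2
  have h := hA.spectral_theorem
  conv_rhs => rw [h, Unitary.conjStarAlgAut_apply]
  rw [conj_mul_conj _ _ _ _ hU]
  rw [trace_conj_aux _ _ _ hU, diagonal_mul_diagonal, trace_diagonal]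
  simp [pow_two]

lemma entropy_aux {A : Matrix n n ℝ} (hA : A.PosSemidef) {t : ℝ}
    (htr : A.trace = t) (htr2 : (A * A).trace = t ^ 2) (hH : A.IsHermitian) :
    ∑ j, -(hH.eigenvalues j * Real.log (hH.eigenvalues j)) = -(t * Real.log t) := by
  have hnn : ∀ j, 0 ≤ hH.eigenvalues j := fun j => hA.eigenvalues_nonneg j
  have hs : ∑ j, hH.eigenvalues j = t := by rw [sum_eigenvalues_eq_trace' hH, htr]
  have hs2 : ∑ j, hH.eigenvalues j ^ 2 = t ^ 2 := by rw [sum_sq_eigenvalues_eq_trace' hH, htr2]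
  have ht : 0 ≤ t := by
    have h0 : (0:ℝ) ≤ ∑ j, hH.eigenvalues j :=
      Finset.sum_nonneg fun j _ => hnn j
    linarith
  have hle : ∀ j, hH.eigenvalues j ≤ t := by
    intro j
    have h1 : hH.eigenvalues j ^ 2 ≤ t ^ 2 := by
      rw [← hs2]
      exact Finset.single_le_sum (f := fun k => hH.eigenvalues k ^ 2)
        (fun k _ => sq_nonneg _) (Finset.mem_univ j)
    nlinarith [hnn j]
  have hsum0 : ∑ j, hH.eigenvalues j * (t - hH.eigenvalues j) = 0 := by
    have h2 : ∑ j, hH.eigenvalues j * (t - hH.eigenvalues j) =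
        t * (∑ j, hH.eigenvalues j) - ∑ j, hH.eigenvalues j ^ 2 := by
      rw [Finset.mul_sum, ← Finset.sum_sub_distrib]
      exact Finset.sum_congr rfl fun j _ => by ring
    rw [h2, hs, hs2]; ring
  have hzero : ∀ j ∈ Finset.univ, hH.eigenvalues j * (t - hH.eigenvalues j) = 0 :=
    (Finset.sum_eq_zero_iff_of_nonneg
      (fun j _ => mul_nonneg (hnn j) (sub_nonneg.2 (hle j)))).mp hsum0
  have hpt : ∀ j : n, hH.eigenvalues j * Real.log (hH.eigenvalues j) =
      hH.eigenvalues j * Real.log t := by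
    intro j
    rcases mul_eq_zero.mp (hzero j (Finset.mem_univ j)) with h | h
    · rw [h]; simp
    · have h3 : hH.eigenvalues j = t := by linarith
      rw [h3]
  simp only [hpt]
  simp only [show ∀ a : ℝ, -(a * Real.log t) = a * (-Real.log t) from fun a => by ring]
  rw [← Finset.sum_mul, hs]

lemma Jherm (c : ℝ) (k : ℕ) : (c • Matrix.of (fun _ _ : Fin k => (1 : ℝ))).IsHermitian := by
  ext i j
  simp [Matrix.conjTranspose_apply]

lemma Jpsd {c : ℝ} (hc : 0 ≤ c) (k : ℕ) :
    (c • Matrix.of (fun _ _ : Fin k => (1 : ℝ))).PosSemidef := by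
  refine PosSemidef.of_dotProduct_mulVec_nonneg (Jherm c k) fun x => ?_
  have hmv : (c • Matrix.of (fun _ _ : Fin k => (1 : ℝ))) *ᵥ x = fun _ => c * ∑ j, x j := by
    ext i
    simp [Matrix.mulVec, dotProduct, Finset.mul_sum]
  rw [hmv]
  have : dotProduct (star x) (fun _ => c * ∑ j, x j) = c * (∑ j, x j) ^ 2 := by
    simp [dotProduct, ← Finset.sum_mul]
    ring
  rw [this]
  positivity

lemma Jtrace (c : ℝ) (k : ℕ) :
    (c • Matrix.of (fun _ _ : Fin k => (1 : ℝ))).trace = k * c := by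
  simp [Matrix.trace, Matrix.diag, Finset.sum_const, mul_comm]

lemma Jmul (c : ℝ) (k : ℕ) :
    (c • Matrix.of (fun _ _ : Fin k => (1 : ℝ))) * (c • Matrix.of (fun _ _ : Fin k => (1 : ℝ)))
      = ((k : ℝ) * c) • (c • Matrix.of (fun _ _ : Fin k => (1 : ℝ))) := by
  ext i j
  simp [Matrix.mul_apply, Finset.sum_const]
  ring

def sigmaBlockEquiv {M : ℕ} (m : Fin M → ℕ) (a : Fin M) :
    Fin (m a) ≃ {x : Σ i : Fin M, Fin (m i) // x.1 = a} where
  toFun j := ⟨⟨a, j⟩, rfl⟩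
  invFun x := Fin.cast (congrArg m x.2) x.1.2
  left_inv j := rfl
  right_inv := by rintro ⟨⟨i, j⟩, rfl⟩; rfl

lemma charpoly_blockDiagonal' {M : ℕ} {m : Fin M → ℕ} (hm : ∀ i, 0 < m i)
    (B : ∀ i : Fin M, Matrix (Fin (m i)) (Fin (m i)) ℝ) :
    (Matrix.blockDiagonal' B).charpoly = ∏ i, (B i).charpoly := by
  have hBT : (Matrix.blockDiagonal' B).BlockTriangular Sigma.fst := by
    rintro ⟨i, j⟩ ⟨i', j'⟩ h
    exact Matrix.blockDiagonal'_apply_ne B j j' (ne_of_gt h)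
  rw [hBT.charpoly]
  refine Finset.prod_congr ?_ fun a _ => ?_
  · apply Finset.eq_univ_of_forall
    intro a
    simp only [Finset.mem_image]
    exact ⟨⟨a, ⟨0, hm a⟩⟩, Finset.mem_univ _, rfl⟩
  · have hre : (Matrix.reindex (sigmaBlockEquiv m a).symm (sigmaBlockEquiv m a).symm
        ((Matrix.blockDiagonal' B).toSquareBlock Sigma.fst a)) = B a := by
      ext j j'
      simp [Matrix.toSquareBlock, Matrix.toSquareBlockProp, Matrix.reindex_apply,
        Matrix.submatrix_apply, sigmaBlockEquiv]
    have h := Matrix.charpoly_reindex (sigmaBlockEquiv m a).symm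
      ((Matrix.blockDiagonal' B).toSquareBlock Sigma.fst a)
    rw [hre] at h
    convert h.symm using 2

lemma roots_prod_X_sub_C' {ι : Type*} [Fintype ι] (f : ι → ℝ) :
    (∏ j, ((X : ℝ[X]) - C (f j))).roots = Finset.univ.val.map f := by
  rw [Polynomial.roots_prod _ _
    (Polynomial.monic_prod_of_monic _ _ fun j _ => Polynomial.monic_X_sub_C _).ne_zero]
  simp [Polynomial.roots_X_sub_C, Multiset.bind_singleton]

/-- The block diagonal matrix with i-th block (pᵢ/mᵢ)·J_{mᵢ} is a density matrix whose
von Neumann entropy equals the Shannon entropy −Σᵢ pᵢ log pᵢ. -/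
theorem kle_generalizes_se {M : ℕ} (p : Fin M → ℝ) (m : Fin M → ℕ)
    (hp : ∀ i, 0 ≤ p i) (hsum : ∑ i, p i = 1) (hm : ∀ i, 0 < m i) :
    (Matrix.blockDiagonal' fun i =>
        (p i / m i) • Matrix.of (fun _ _ : Fin (m i) => (1 : ℝ))).PosSemidef ∧
    (Matrix.blockDiagonal' fun i =>
        (p i / m i) • Matrix.of (fun _ _ : Fin (m i) => (1 : ℝ))).trace = 1 ∧
    ∀ hK : (Matrix.blockDiagonal' fun i =>
        (p i / m i) • Matrix.of (fun _ _ : Fin (m i) => (1 : ℝ))).IsHermitian,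
      ∑ j, -(hK.eigenvalues j * Real.log (hK.eigenvalues j)) =
        -∑ i, p i * Real.log (p i) := by
  have hmne : ∀ i, ((m i : ℝ)) ≠ 0 := fun i => Nat.cast_ne_zero.mpr (hm i).ne'
  have hc : ∀ i, 0 ≤ p i / (m i : ℝ) := fun i => div_nonneg (hp i) (Nat.cast_nonneg _)
  have hherm : ∀ i, ((p i / m i) • Matrix.of (fun _ _ : Fin (m i) => (1 : ℝ))).IsHermitian :=
    fun i => Jherm _ _
  have hpsd : ∀ i, ((p i / m i) • Matrix.of (fun _ _ : Fin (m i) => (1 : ℝ))).PosSemidef :=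
    fun i => Jpsd (hc i) _
  have htr : ∀ i, ((p i / m i) • Matrix.of (fun _ _ : Fin (m i) => (1 : ℝ))).trace = p i := by
    intro i
    rw [Jtrace, mul_comm, div_mul_cancel₀ _ (hmne i)]
  have htr2 : ∀ i, (((p i / m i) • Matrix.of (fun _ _ : Fin (m i) => (1 : ℝ))) *
      ((p i / m i) • Matrix.of (fun _ _ : Fin (m i) => (1 : ℝ)))).trace = p i ^ 2 := by
    intro i
    rw [Jmul, Matrix.trace_smul, htr i, smul_eq_mul]
    rw [show (m i : ℝ) * (p i / m i) = p i from by
      rw [mul_comm, div_mul_cancel₀ _ (hmne i)]]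
    ring
  have hKherm : (Matrix.blockDiagonal' fun i =>
      (p i / m i) • Matrix.of (fun _ _ : Fin (m i) => (1 : ℝ))).IsHermitian := by
    unfold Matrix.IsHermitian
    rw [Matrix.blockDiagonal'_conjTranspose]
    exact congrArg _ (funext fun i => hherm i)
  have hchar := charpoly_blockDiagonal' hm
    (fun i => (p i / m i) • Matrix.of (fun _ _ : Fin (m i) => (1 : ℝ)))
  have hMS : ∀ hK : (Matrix.blockDiagonal' fun i =>
      (p i / m i) • Matrix.of (fun _ _ : Fin (m i) => (1 : ℝ))).IsHermitian,
      (Finset.univ.val.map hK.eigenvalues) =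
        Finset.univ.val.bind (fun i => Finset.univ.val.map (hherm i).eigenvalues) := by
    intro hK
    have h1 : ∏ j, ((X : ℝ[X]) - C (hK.eigenvalues j)) =
        ∏ i, ∏ j, ((X : ℝ[X]) - C ((hherm i).eigenvalues j)) := by
      rw [← charpoly_eq_prod_eigenvalues hK, hchar]
      exact Finset.prod_congr rfl fun i _ => charpoly_eq_prod_eigenvalues (hherm i)
    have h2 := congrArg Polynomial.roots h1
    rw [roots_prod_X_sub_C', Polynomial.roots_prod _ _
      (Polynomial.monic_prod_of_monic _ _ fun i _ =>
        Polynomial.monic_prod_of_monic _ _ fun j _ => Polynomial.monic_X_sub_C _).ne_zero] at h2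
    simpa only [roots_prod_X_sub_C'] using h2
  refine ⟨?_, ?_, ?_⟩
  · refine hKherm.posSemidef_iff_eigenvalues_nonneg.mpr fun j => ?_
    have hmem : hKherm.eigenvalues j ∈ Finset.univ.val.map hKherm.eigenvalues :=
      Multiset.mem_map_of_mem _ (Finset.mem_univ j)
    rw [hMS hKherm] at hmem
    obtain ⟨i, -, hmem2⟩ := Multiset.mem_bind.mp hmem
    obtain ⟨j', -, hj'⟩ := Multiset.mem_map.mp hmem2
    rw [← hj']
    exact (hpsd i).eigenvalues_nonneg j'
  · rw [Matrix.trace_blockDiagonal']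
    rw [Finset.sum_congr rfl fun i _ => htr i]
    exact hsum
  · intro hK
    have e1 : ∑ j, -(hK.eigenvalues j * Real.log (hK.eigenvalues j)) =
        ((Finset.univ.val.map hK.eigenvalues).map
          (fun x => -(x * Real.log x))).sum := by
      rw [Multiset.map_map]
      rfl
    rw [e1, hMS hK, Multiset.map_bind, Multiset.sum_bind]
    have e2 : ∀ i, ((Finset.univ.val.map (hherm i).eigenvalues).map
        (fun x => -(x * Real.log x))).sum = -(p i * Real.log (p i)) := by
      intro i
      rw [Multiset.map_map]
      exact entropy_aux (hpsd i) (htr i) (htr2 i) (hherm i)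
    calc (Finset.univ.val.map fun i => ((Finset.univ.val.map (hherm i).eigenvalues).map
            (fun x => -(x * Real.log x))).sum).sum
        = ∑ i, -(p i * Real.log (p i)) := by
          rw [show (Finset.univ.val.map fun i => ((Finset.univ.val.map (hherm i).eigenvalues).map
            (fun x => -(x * Real.log x))).sum).sum =
            ∑ i, ((Finset.univ.val.map (hherm i).eigenvalues).map
            (fun x => -(x * Real.log x))).sum from rfl]
          exact Finset.sum_congr rfl fun i _ => e2 i
      _ = -∑ i, p i * Real.log (p i) := by rw [← Finset.sum_neg_distrib]
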